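/- The zeros of cos(kθ/2) in (π/2, 2π/3) interlace with the zeros of cos((k+12)θ/2) in (π/2, 2π/3): the first and last zeros in the interval belong to cos((k+12)θ/2), no zero is shared, and between any two consecutive zeros of cos((k+12)θ/2) there is exactly one zero of cos(kθ/2). -/
import Mathlib

open Real Set

lemma frac_lt (a c b d : ℤ) (hb : (0:ℤ) < b) (hd : (0:ℤ) < d) :
    (a:ℝ) * π / (b:ℝ) < (c:ℝ) * π / (d:ℝ) ↔ a * d < c * b := by
  have hb' : (0:ℝ) < b := by exact_mod_cast hb
  have hd' : (0:ℝ) < d := by exact_mod_cast hd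
  rw [div_lt_div_iff₀ hb' hd']
  have h : (a:ℝ) * π * d < c * π * b ↔ ((a*d : ℤ):ℝ) < ((c*b : ℤ):ℝ) := by
    push_cast
    constructor <;> intro h <;> nlinarith [Real.pi_pos]
  rw [h, Int.cast_lt]

lemma left_lt (a b : ℤ) (hb : (0:ℤ) < b) : π/2 < (a:ℝ) * π / (b:ℝ) ↔ b < 2*a := by
  have : π/2 = ((1:ℤ):ℝ) * π / ((2:ℤ):ℝ) := by norm_num
  rw [this, frac_lt 1 a 2 b (by norm_num) hb]
  omega

lemma lt_right (a b : ℤ) (hb : (0:ℤ) < b) : (a:ℝ) * π / (b:ℝ) < 2*π/3 ↔ 3*a < 2*b := by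
  have : 2*π/3 = ((2:ℤ):ℝ) * π / ((3:ℤ):ℝ) := by norm_num
  rw [this, frac_lt a 2 b 3 hb (by norm_num)]
  omega

lemma mem_zero_set_iff (c : ℤ) (hc : (0:ℤ) < c) (θ : ℝ) :
    (θ ∈ Set.Ioo (π/2) (2*π/3) ∧ Real.cos ((c:ℝ) * θ / 2) = 0) ↔
    ∃ m : ℤ, Odd m ∧ θ = (m:ℝ) * π / (c:ℝ) ∧ c < 2*m ∧ 3*m < 2*c := by
  have hc' : (0:ℝ) < c := by exact_mod_cast hc
  constructor
  · rintro ⟨hθ, hcos⟩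
    rw [Real.cos_eq_zero_iff] at hcos
    obtain ⟨n, hn⟩ := hcos
    have hθeq : θ = ((2*n+1 : ℤ):ℝ) * π / (c:ℝ) := by
      push_cast
      field_simp at hn ⊢
      linarith
    refine ⟨2*n+1, ⟨n, by ring⟩, hθeq, ?_, ?_⟩
    · rw [hθeq, Set.mem_Ioo, left_lt _ _ hc, lt_right _ _ hc] at hθ
      exact hθ.1
    · rw [hθeq, Set.mem_Ioo, left_lt _ _ hc, lt_right _ _ hc] at hθ
      exact hθ.2
  · rintro ⟨m, ⟨n, rfl⟩, rfl, h1, h2⟩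
    refine ⟨Set.mem_Ioo.mpr ⟨(left_lt _ _ hc).mpr (by omega), (lt_right _ _ hc).mpr (by omega)⟩, ?_⟩
    rw [Real.cos_eq_zero_iff]
    refine ⟨n, ?_⟩
    push_cast
    field_simp

theorem stmt7 (k : ℤ) (hk : 4 ≤ k) (hke : Even k)
    (Z Zstar : Set ℝ)
    (hZ : Z = {θ ∈ Set.Ioo (π / 2) (2 * π / 3) | Real.cos ((k : ℝ) * θ / 2) = 0})
    (hZstar : Zstar = {θ ∈ Set.Ioo (π / 2) (2 * π / 3) |
      Real.cos (((k : ℝ) + 12) * θ / 2) = 0}) :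
    (∃ α ∈ Zstar, ∀ β ∈ Z, α < β) ∧
    (∃ α ∈ Zstar, ∀ β ∈ Z, β < α) ∧
    Z ∩ Zstar = ∅ ∧
    (∀ α₁ ∈ Zstar, ∀ α₂ ∈ Zstar, α₁ < α₂ →
      (∀ θ ∈ Set.Ioo α₁ α₂, θ ∉ Zstar) →
      ∃! β, β ∈ Set.Ioo α₁ α₂ ∧ β ∈ Z) := by
  have hk0 : (0:ℤ) < k := by omega
  have hK0 : (0:ℤ) < k + 12 := by omega
  have hke' : k % 2 = 0 := Int.even_iff.mp hke
  have hZmem : ∀ θ : ℝ, θ ∈ Z ↔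
      ∃ m : ℤ, Odd m ∧ θ = (m:ℝ) * π / (k:ℝ) ∧ k < 2*m ∧ 3*m < 2*k := by
    intro θ
    rw [hZ]
    exact mem_zero_set_iff k hk0 θ
  have hZsmem : ∀ θ : ℝ, θ ∈ Zstar ↔
      ∃ m : ℤ, Odd m ∧ θ = (m:ℝ) * π / ((k+12 : ℤ):ℝ) ∧ k+12 < 2*m ∧ 3*m < 2*(k+12) := by
    intro θ
    rw [hZstar]
    have : ((k:ℝ) + 12) = ((k+12 : ℤ):ℝ) := by push_cast; ring
    rw [show ({θ ∈ Set.Ioo (π / 2) (2 * π / 3) | Real.cos (((k : ℝ) + 12) * θ / 2) = 0} : Set ℝ)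
        = {θ ∈ Set.Ioo (π / 2) (2 * π / 3) | Real.cos (((k+12 : ℤ) : ℝ) * θ / 2) = 0} by
      simp only [this]]
    exact mem_zero_set_iff (k+12) hK0 θ
  refine ⟨?_, ?_, ?_, ?_⟩
  · -- first zero belongs to Zstar
    set n₀ : ℤ := k/2 + 7 + (k/2 % 2) with hn₀
    refine ⟨(n₀:ℝ) * π / ((k+12:ℤ):ℝ), (hZsmem _).mpr ⟨n₀, by
      refine ⟨Int.odd_iff.mpr (by omega), rfl, by omega, by omega⟩⟩, ?_⟩
    intro β hβ
    obtain ⟨m, hmo, rfl, hm1, hm2⟩ := (hZmem β).mp hβ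
    have hmo' : m % 2 = 1 := Int.odd_iff.mp hmo
    rw [frac_lt _ _ _ _ hK0 hk0]
    have h6 : n₀ ≤ m + 6 := by omega
    have := mul_le_mul_of_nonneg_right h6 (le_of_lt hk0)
    linarith
  · -- last zero belongs to Zstar
    set n₁ : ℤ := 2*((k+10)/3)+1 with hn₁
    refine ⟨(n₁:ℝ) * π / ((k+12:ℤ):ℝ), (hZsmem _).mpr ⟨n₁, by
      refine ⟨Int.odd_iff.mpr (by omega), rfl, by omega, by omega⟩⟩, ?_⟩
    intro β hβ
    obtain ⟨m, hmo, rfl, hm1, hm2⟩ := (hZmem β).mp hβ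
    have hmo' : m % 2 = 1 := Int.odd_iff.mp hmo
    rw [frac_lt _ _ _ _ hk0 hK0]
    have h8 : m + 8 ≤ n₁ := by omega
    have := mul_le_mul_of_nonneg_right h8 (le_of_lt hk0)
    linarith
  · -- disjoint
    ext θ
    simp only [Set.mem_inter_iff, Set.mem_empty_iff_false, iff_false]
    rintro ⟨hθZ, hθZs⟩
    rw [hZ] at hθZ
    rw [hZstar] at hθZs
    obtain ⟨hI, hc1⟩ := hθZ
    obtain ⟨_, hc2⟩ := hθZs
    rw [Real.cos_eq_zero_iff] at hc1 hc2
    obtain ⟨a, ha⟩ := hc1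
    obtain ⟨b, hb⟩ := hc2
    have hθeq : θ = ((b - a : ℤ):ℝ) * π / ((6:ℤ):ℝ) := by
      push_cast
      linear_combination (hb - ha) / 6
    rw [hθeq] at hI
    obtain ⟨hI1, hI2⟩ := Set.mem_Ioo.mp hI
    rw [left_lt _ _ (by norm_num)] at hI1
    rw [lt_right _ _ (by norm_num)] at hI2
    omega
  · -- interlacing
    intro α₁ hα₁ α₂ hα₂ hlt hcons
    obtain ⟨n, hno, rfl, hn1, hn2⟩ := (hZsmem α₁).mp hα₁
    obtain ⟨n', hno', rfl, hn1', hn2'⟩ := (hZsmem α₂).mp hα₂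
    have hno2 : n % 2 = 1 := Int.odd_iff.mp hno
    have hno2' : n' % 2 = 1 := Int.odd_iff.mp hno'
    have hnn' : n < n' := by
      rw [frac_lt _ _ _ _ hK0 hK0] at hlt
      exact lt_of_mul_lt_mul_right hlt (le_of_lt hK0)
    have hstep : n' = n + 2 := by
      by_contra h
      have h4 : n + 4 ≤ n' := by omega
      have hmid : ((n+2 : ℤ):ℝ) * π / ((k+12:ℤ):ℝ) ∈ Set.Ioo ((n:ℝ) * π / ((k+12:ℤ):ℝ)) ((n':ℝ) * π / ((k+12:ℤ):ℝ)) := by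
        constructor
        · rw [frac_lt _ _ _ _ hK0 hK0]
          nlinarith
        · rw [frac_lt _ _ _ _ hK0 hK0]
          nlinarith
      refine hcons _ hmid ((hZsmem _).mpr ⟨n+2, Int.odd_iff.mpr (by omega), rfl, by omega, by omega⟩)
    subst hstep
    refine ⟨((n-6 : ℤ):ℝ) * π / (k:ℝ), ⟨⟨?_, ?_⟩, ?_⟩, ?_⟩
    · rw [frac_lt _ _ _ _ hK0 hk0]
      linarith
    · rw [frac_lt _ _ _ _ hk0 hK0]
      linarith
    · refine (hZmem _).mpr ⟨n - 6, Int.odd_iff.mpr (by omega), rfl, by omega, by omega⟩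
    · rintro β' ⟨⟨hb1, hb2⟩, hβ'Z⟩
      obtain ⟨m, hmo, rfl, hm1, hm2⟩ := (hZmem _).mp hβ'Z
      have hmo' : m % 2 = 1 := Int.odd_iff.mp hmo
      rw [frac_lt _ _ _ _ hK0 hk0] at hb1
      rw [frac_lt _ _ _ _ hk0 hK0] at hb2
      have hu : m ≤ n - 5 := by
        by_contra h
        push_neg at h
        have h4 : n - 4 ≤ m := by omega
        have := mul_le_mul_of_nonneg_right h4 (le_of_lt hK0)
        linarith
      have hl : n - 7 ≤ m := by
        by_contra h
        push_neg at h
        have h8 : m ≤ n - 8 := by omega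
        have := mul_le_mul_of_nonneg_right h8 (le_of_lt hK0)
        linarith
      have : m = n - 6 := by omega
      rw [this]
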